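/- For a b-metric space (X, d, S) with S ≥ 1, the function ρ(x,y) = d(x,y)^p for p = log_{2S} 2 (so that (2S)^p = 2) satisfies the uniform regularity condition with φ(ε) = ε/2, i.e., ρ(x,y) < ε/2 and ρ(y,z) < ε/2 imply ρ(x,z) < ε. -/
import Mathlib

/-- For a b-metric space with S ≥ 1, the snowflaked distance ρ(x,y) = d(x,y)^p
with p = log_{2S} 2 is uniformly regular with φ(ε) = ε/2. -/
theorem bMetric_rpow_uniformly_regular {X : Type*} [Nonempty X]
    (d : X → X → ℝ) (S : ℝ) (hS : 1 ≤ S)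
    (hnn : ∀ x y, 0 ≤ d x y)
    (h0 : ∀ x y, d x y = 0 ↔ x = y)
    (hsymm : ∀ x y, d x y = d y x)
    (htri : ∀ x y z, d x z ≤ S * (d x y + d y z)) :
    ∀ ε > (0:ℝ), ∀ x y z : X,
      d x y ^ (Real.logb (2 * S) 2) < ε / 2 →
      d y z ^ (Real.logb (2 * S) 2) < ε / 2 →
      d x z ^ (Real.logb (2 * S) 2) < ε := by
  intro ε hε x y z h1 h2
  set p := Real.logb (2 * S) 2 with hp_def
  have hppos : 0 < p := Real.logb_pos (by linarith) (by norm_num)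
  have hkey : (2 * S) ^ p = 2 :=
    Real.rpow_logb (by linarith) (by nlinarith) (by norm_num)
  rcases le_total (d x y) (d y z) with hle | hle
  · have hbd : d x z ≤ 2 * S * d y z := by nlinarith [htri x y z, hnn x y, hnn y z]
    calc d x z ^ p ≤ (2 * S * d y z) ^ p := Real.rpow_le_rpow (hnn x z) hbd hppos.le
      _ = (2 * S) ^ p * d y z ^ p := Real.mul_rpow (by linarith) (hnn y z)
      _ = 2 * d y z ^ p := by rw [hkey]
      _ < ε := by linarith
  · have hbd : d x z ≤ 2 * S * d x y := by nlinarith [htri x y z, hnn x y, hnn y z]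
    calc d x z ^ p ≤ (2 * S * d x y) ^ p := Real.rpow_le_rpow (hnn x z) hbd hppos.le
      _ = (2 * S) ^ p * d x y ^ p := Real.mul_rpow (by linarith) (hnn x y)
      _ = 2 * d x y ^ p := by rw [hkey]
      _ < ε := by linarith
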